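/- arXiv:2404.09580 — 5 statements merged into one kernel-verified Lean document; each statement's English description precedes it below -/
import Mathlib

section
/- Let $I \subseteq \mathbb{R}$ be an interval and let $\mu, w : I \to (0,\infty)$ be weights in the Muckenhoupt class $A_2(I)$, i.e. $(\fint_J \mu)(\fint_J 1/\mu) \le C$ and $(\fint_J w)(\fint_J 1/w) \le C$ for all subintervals $J \subseteq I$. Then for every subinterval $J \subseteq I$, $\big(\int_J \mu\,dx\big)\big(\int_J \tfrac{1}{w}\,dx\big) \lesssim \big(\int_J \sqrt{\mu/w}\,dx\big)^2$, with implicit constant depending only on the $A_2$ constants of $\mu$ and $w$. -/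
open MeasureTheory

/-- Cauchy–Schwarz for integrals of square roots. -/
lemma sqrt_cs {ν : Measure ℝ} {f g : ℝ → ℝ} (hf : Integrable f ν) (hg : Integrable g ν)
    (hf0 : 0 ≤ᵐ[ν] f) (hg0 : 0 ≤ᵐ[ν] g) :
    (∫ x, Real.sqrt (f x) * Real.sqrt (g x) ∂ν) ^ 2 ≤ (∫ x, f x ∂ν) * (∫ x, g x ∂ν) := by
  have h2 : (2 : ℝ).HolderConjugate 2 := Real.HolderConjugate.two_two
  have hFm : AEStronglyMeasurable (fun x => Real.sqrt (f x)) ν :=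
    (Real.continuous_sqrt.comp_aestronglyMeasurable hf.aestronglyMeasurable)
  have hGm : AEStronglyMeasurable (fun x => Real.sqrt (g x)) ν :=
    (Real.continuous_sqrt.comp_aestronglyMeasurable hg.aestronglyMeasurable)
  have hsqF : (fun x => Real.sqrt (f x) ^ 2) =ᵐ[ν] f := by
    filter_upwards [hf0] with x hx using Real.sq_sqrt hx
  have hsqG : (fun x => Real.sqrt (g x) ^ 2) =ᵐ[ν] g := by
    filter_upwards [hg0] with x hx using Real.sq_sqrt hx
  have hF : MemLp (fun x => Real.sqrt (f x)) (ENNReal.ofReal 2) ν := by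
    rw [show ENNReal.ofReal 2 = 2 by norm_num]
    exact (memLp_two_iff_integrable_sq hFm).2 (hf.congr hsqF.symm)
  have hG : MemLp (fun x => Real.sqrt (g x)) (ENNReal.ofReal 2) ν := by
    rw [show ENNReal.ofReal 2 = 2 by norm_num]
    exact (memLp_two_iff_integrable_sq hGm).2 (hg.congr hsqG.symm)
  have key := integral_mul_le_Lp_mul_Lq_of_nonneg h2
    (Filter.Eventually.of_forall fun x => Real.sqrt_nonneg (f x))
    (Filter.Eventually.of_forall fun x => Real.sqrt_nonneg (g x)) hF hG
  have hIf : (∫ x, Real.sqrt (f x) ^ (2:ℝ) ∂ν) = ∫ x, f x ∂ν := by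
    refine integral_congr_ae ?_
    filter_upwards [hf0] with x hx
    rw [Real.rpow_two, Real.sq_sqrt hx]
  have hIg : (∫ x, Real.sqrt (g x) ^ (2:ℝ) ∂ν) = ∫ x, g x ∂ν := by
    refine integral_congr_ae ?_
    filter_upwards [hg0] with x hx
    rw [Real.rpow_two, Real.sq_sqrt hx]
  rw [hIf, hIg] at key
  have key2 : (∫ x, Real.sqrt (f x) * Real.sqrt (g x) ∂ν) ≤
      Real.sqrt (∫ x, f x ∂ν) * Real.sqrt (∫ x, g x ∂ν) := by
    simpa [Real.sqrt_eq_rpow] using key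
  have hfI : 0 ≤ ∫ x, f x ∂ν := integral_nonneg_of_ae hf0
  have hgI : 0 ≤ ∫ x, g x ∂ν := integral_nonneg_of_ae hg0
  calc (∫ x, Real.sqrt (f x) * Real.sqrt (g x) ∂ν) ^ 2
      ≤ (Real.sqrt (∫ x, f x ∂ν) * Real.sqrt (∫ x, g x ∂ν)) ^ 2 := by
        refine pow_le_pow_left₀ ?_ key2 2
        exact integral_nonneg fun x => mul_nonneg (Real.sqrt_nonneg _) (Real.sqrt_nonneg _)
    _ = (∫ x, f x ∂ν) * (∫ x, g x ∂ν) := by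
        rw [mul_pow, Real.sq_sqrt hfI, Real.sq_sqrt hgI]

/-- If `μ, w` are `A₂` weights on an interval `I ⊆ ℝ` (with constants `Cμ, Cw`),
then `(∫_J μ)(∫_J 1/w) ≲ (∫_J √(μ/w))²` for all subintervals `J ⊆ I`, with implicit constant
depending only on the `A₂` constants. -/
theorem stmt_0 (Cμ Cw : ℝ) :
    ∃ C : ℝ, ∀ (I : Set ℝ) (μ w : ℝ → ℝ),
      (∀ x ∈ I, 0 < μ x) → (∀ x ∈ I, 0 < w x) →
      (∀ a b : ℝ, a ≤ b → Set.Icc a b ⊆ I →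
        IntervalIntegrable μ volume a b ∧ IntervalIntegrable (fun x => (μ x)⁻¹) volume a b ∧
        IntervalIntegrable w volume a b ∧ IntervalIntegrable (fun x => (w x)⁻¹) volume a b) →
      (∀ a b : ℝ, a ≤ b → Set.Icc a b ⊆ I →
        (∫ x in a..b, μ x) * (∫ x in a..b, (μ x)⁻¹) ≤ Cμ * (b - a) ^ 2) →
      (∀ a b : ℝ, a ≤ b → Set.Icc a b ⊆ I →
        (∫ x in a..b, w x) * (∫ x in a..b, (w x)⁻¹) ≤ Cw * (b - a) ^ 2) →
      ∀ a b : ℝ, a ≤ b → Set.Icc a b ⊆ I →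
        (∫ x in a..b, μ x) * (∫ x in a..b, (w x)⁻¹) ≤
          C * (∫ x in a..b, Real.sqrt (μ x / w x)) ^ 2 := by
  refine ⟨Cμ * Cw, fun I μ w hμpos hwpos hint hA2μ hA2w a b hab hJ => ?_⟩
  rcases eq_or_lt_of_le hab with rfl | hab'
  · simp
  -- nontrivial interval
  obtain ⟨hμi, hμinvi, hwi, hwinvi⟩ := hint a b hab hJ
  set ν : Measure ℝ := volume.restrict (Set.Ioc a b) with hν
  have hmem : ∀ᵐ x ∂ν, x ∈ Set.Ioc a b :=
    ae_restrict_mem measurableSet_Ioc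
  have hIoc : Set.Ioc a b ⊆ I := fun x hx => hJ ⟨le_of_lt hx.1, hx.2⟩
  have hμpos' : ∀ᵐ x ∂ν, 0 < μ x := by
    filter_upwards [hmem] with x hx using hμpos x (hIoc hx)
  have hwpos' : ∀ᵐ x ∂ν, 0 < w x := by
    filter_upwards [hmem] with x hx using hwpos x (hIoc hx)
  have hμI : Integrable μ ν := (intervalIntegrable_iff_integrableOn_Ioc_of_le hab).1 hμi
  have hμinvI : Integrable (fun x => (μ x)⁻¹) ν :=
    (intervalIntegrable_iff_integrableOn_Ioc_of_le hab).1 hμinvi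
  have hwI : Integrable w ν := (intervalIntegrable_iff_integrableOn_Ioc_of_le hab).1 hwi
  have hwinvI : Integrable (fun x => (w x)⁻¹) ν :=
    (intervalIntegrable_iff_integrableOn_Ioc_of_le hab).1 hwinvi
  -- integrability of √(μ/w) and √(w/μ)
  have sqrt_am : ∀ u v : ℝ, 0 < u → 0 < v → Real.sqrt (u / v) ≤ (u + v⁻¹) / 2 := by
    intro u v hu hv
    have h1 : u / v = u * v⁻¹ := div_eq_mul_inv u v
    have h2 : u * v⁻¹ ≤ ((u + v⁻¹) / 2) ^ 2 := by nlinarith [sq_nonneg (u - v⁻¹), inv_pos.2 hv]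
    calc Real.sqrt (u / v) ≤ Real.sqrt (((u + v⁻¹) / 2) ^ 2) := by
          rw [h1]; exact Real.sqrt_le_sqrt h2
      _ = (u + v⁻¹) / 2 := Real.sqrt_sq (by positivity)
  have hμw_meas : AEStronglyMeasurable (fun x => Real.sqrt (μ x / w x)) ν :=
    (Real.continuous_sqrt.comp_aestronglyMeasurable
      ((hμI.aemeasurable.div hwI.aemeasurable).aestronglyMeasurable))
  have hwμ_meas : AEStronglyMeasurable (fun x => Real.sqrt (w x / μ x)) ν :=
    (Real.continuous_sqrt.comp_aestronglyMeasurable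
      ((hwI.aemeasurable.div hμI.aemeasurable).aestronglyMeasurable))
  have hFint : Integrable (fun x => Real.sqrt (μ x / w x)) ν := by
    refine Integrable.mono' ((hμI.add hwinvI).div_const 2) hμw_meas ?_
    filter_upwards [hμpos', hwpos'] with x hμx hwx
    rw [Real.norm_of_nonneg (Real.sqrt_nonneg _)]
    exact sqrt_am _ _ hμx hwx
  have hGint : Integrable (fun x => Real.sqrt (w x / μ x)) ν := by
    refine Integrable.mono' ((hwI.add hμinvI).div_const 2) hwμ_meas ?_
    filter_upwards [hμpos', hwpos'] with x hμx hwx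
    rw [Real.norm_of_nonneg (Real.sqrt_nonneg _)]
    exact sqrt_am _ _ hwx hμx
  -- notation for integrals
  set P := ∫ x, μ x ∂ν with hP
  set Q := ∫ x, (μ x)⁻¹ ∂ν with hQ
  set R := ∫ x, w x ∂ν with hR
  set S := ∫ x, (w x)⁻¹ ∂ν with hS
  set T := ∫ x, Real.sqrt (μ x / w x) ∂ν with hT
  set U := ∫ x, Real.sqrt (w x / μ x) ∂ν with hU
  have conv : ∀ f : ℝ → ℝ, (∫ x in a..b, f x) = ∫ x, f x ∂ν := fun f =>
    intervalIntegral.integral_of_le hab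
  -- positivity
  have hQpos : 0 < Q := by
    rw [hQ, ← conv]
    exact intervalIntegral.intervalIntegral_pos_of_pos_on hμinvi
      (fun x hx => inv_pos.2 (hμpos x (hJ ⟨le_of_lt hx.1, le_of_lt hx.2⟩))) hab'
  have hRpos : 0 < R := by
    rw [hR, ← conv]
    exact intervalIntegral.intervalIntegral_pos_of_pos_on hwi
      (fun x hx => hwpos x (hJ ⟨le_of_lt hx.1, le_of_lt hx.2⟩)) hab'
  have hPpos : 0 < P := by
    rw [hP, ← conv]
    exact intervalIntegral.intervalIntegral_pos_of_pos_on hμi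
      (fun x hx => hμpos x (hJ ⟨le_of_lt hx.1, le_of_lt hx.2⟩)) hab'
  have hSpos : 0 < S := by
    rw [hS, ← conv]
    exact intervalIntegral.intervalIntegral_pos_of_pos_on hwinvi
      (fun x hx => inv_pos.2 (hwpos x (hJ ⟨le_of_lt hx.1, le_of_lt hx.2⟩))) hab'
  have hTnn : 0 ≤ T := integral_nonneg fun x => Real.sqrt_nonneg _
  have hUnn : 0 ≤ U := integral_nonneg fun x => Real.sqrt_nonneg _
  -- A2 conditions
  have hA2μ' : P * Q ≤ Cμ * (b - a) ^ 2 := by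
    rw [hP, hQ, ← conv, ← conv]; exact hA2μ a b hab hJ
  have hA2w' : R * S ≤ Cw * (b - a) ^ 2 := by
    rw [hR, hS, ← conv, ← conv]; exact hA2w a b hab hJ
  -- CS 1 : (b-a)^2 ≤ T * U
  have hCS1 : (b - a) ^ 2 ≤ T * U := by
    have := sqrt_cs (ν := ν) hFint hGint
      (Filter.Eventually.of_forall fun x => Real.sqrt_nonneg _)
      (Filter.Eventually.of_forall fun x => Real.sqrt_nonneg _)
    have hone : (∫ x, Real.sqrt (Real.sqrt (μ x / w x)) *
        Real.sqrt (Real.sqrt (w x / μ x)) ∂ν) = b - a := by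
      rw [show (∫ x, Real.sqrt (Real.sqrt (μ x / w x)) *
          Real.sqrt (Real.sqrt (w x / μ x)) ∂ν) = ∫ x, (1 : ℝ) ∂ν from ?_]
      · simp [hν, hab, Real.volume_Ioc, ENNReal.toReal_ofReal (by linarith : (0:ℝ) ≤ b - a)]
      · refine integral_congr_ae ?_
        filter_upwards [hμpos', hwpos'] with x hμx hwx
        rw [← Real.sqrt_mul (Real.sqrt_nonneg _), ← Real.sqrt_mul (by positivity)]
        rw [show μ x / w x * (w x / μ x) = 1 by field_simp]
        simp
    rw [hone] at this
    exact this
  -- CS 2 : U^2 ≤ R * Q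
  have hCS2 : U ^ 2 ≤ R * Q := by
    have := sqrt_cs (ν := ν) hwI hμinvI
      (by filter_upwards [hwpos'] with x hx using le_of_lt hx)
      (by filter_upwards [hμpos'] with x hx using le_of_lt (inv_pos.2 hx))
    have heq : (∫ x, Real.sqrt (w x) * Real.sqrt ((μ x)⁻¹) ∂ν) = U := by
      rw [hU]
      refine integral_congr_ae ?_
      filter_upwards [hμpos', hwpos'] with x hμx hwx
      rw [← Real.sqrt_mul (le_of_lt hwx), ← div_eq_mul_inv]
    rw [heq] at this
    exact this
  -- conclude
  rw [conv μ, conv (fun x => (w x)⁻¹), conv (fun x => Real.sqrt (μ x / w x))]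
  have hCμpos : 0 < Cμ := by
    nlinarith [mul_pos hPpos hQpos, sq_nonneg (b - a)]
  have hCwpos : 0 < Cw := by
    nlinarith [mul_pos hRpos hSpos, sq_nonneg (b - a)]
  have hTU : 0 < T * U := lt_of_lt_of_le (pow_pos (by linarith : (0:ℝ) < b - a) 2) hCS1
  -- P * S * (Q * R) ≤ Cμ * Cw * T^2 * (Q * R)
  have key : P * S * (Q * R) ≤ Cμ * Cw * T ^ 2 * (Q * R) := by
    have h1 : P * Q * (R * S) ≤ (Cμ * (b - a) ^ 2) * (Cw * (b - a) ^ 2) :=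
      mul_le_mul hA2μ' hA2w' (by positivity) (by positivity)
    have h2 : (b - a) ^ 2 * (b - a) ^ 2 ≤ (T * U) * (T * U) :=
      mul_le_mul hCS1 hCS1 (sq_nonneg _) (le_of_lt hTU)
    have h3 : (b - a) ^ 2 * (b - a) ^ 2 ≤ T ^ 2 * (Q * R) := by
      nlinarith [mul_le_mul_of_nonneg_left hCS2 (sq_nonneg T)]
    calc P * S * (Q * R) = P * Q * (R * S) := by ring
      _ ≤ Cμ * (b - a) ^ 2 * (Cw * (b - a) ^ 2) := h1
      _ = Cμ * Cw * ((b - a) ^ 2 * (b - a) ^ 2) := by ring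
      _ ≤ Cμ * Cw * (T ^ 2 * (Q * R)) :=
          mul_le_mul_of_nonneg_left h3 (by positivity)
      _ = Cμ * Cw * T ^ 2 * (Q * R) := by ring
  exact le_of_mul_le_mul_right key (mul_pos hQpos hRpos)
end

section
/- Let $\mu, w$ be smooth positive weights on $I \subseteq \mathbb{R}$, $\rho' = \sqrt{\mu/w}$, $\nu\circ\rho = \sqrt{\mu w}$. For smooth functions $v_1, v_2$ on $M = \rho(I)$, the intertwining identities hold: $\partial_x(v_1\circ\rho) = \rho'\,(\partial_y v_1)\circ\rho$ and $\frac{1}{\mu}\partial_x\big(w\,\rho'\,(v_2\circ\rho)\big) = \Big(\frac{1}{\nu}\partial_y(\nu v_2)\Big)\circ\rho$. Consequently, writing $D = \begin{bmatrix} 0 & -(1/\mu)\partial_x w \\ \partial_x & 0\end{bmatrix}$ and $D_M = \begin{bmatrix} 0 & -(1/\nu)\partial_y \nu \\ \partial_y & 0\end{bmatrix}$, and $T$ the pullback $(v_1,v_2)\mapsto(v_1\circ\rho, (v_2\circ\rho)\rho')$, one has $T D_M = D T$ on smooth pairs. -/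
/-- Intertwining identities for the rubber-band change of variables.
With `ρ' = √(μ/w)` and `ν ∘ ρ = √(μw)` on an open interval `I`, for differentiable
`v₁, v₂` (and `y ↦ ν(y)v₂(y)` differentiable) one has
`∂ₓ(v₁∘ρ) = ρ'·(∂_y v₁)∘ρ` and `(1/μ)∂ₓ(w·ρ'·(v₂∘ρ)) = ((1/ν)∂_y(ν v₂))∘ρ`,
i.e. `T D_M = D T` on smooth pairs. -/
theorem stmt_3 (I : Set ℝ) (hI : IsOpen I) (μ w ν ρ : ℝ → ℝ)
    (hμ : ∀ x ∈ I, 0 < μ x) (hw : ∀ x ∈ I, 0 < w x)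
    (hρ : ∀ x ∈ I, HasDerivAt ρ (Real.sqrt (μ x / w x)) x)
    (hν : ∀ x ∈ I, ν (ρ x) = Real.sqrt (μ x * w x))
    (v₁ v₂ : ℝ → ℂ)
    (hv₁ : Differentiable ℝ v₁) (hv₂ : Differentiable ℝ v₂)
    (hνv₂ : Differentiable ℝ (fun y => (ν y : ℂ) * v₂ y)) :
    ∀ x ∈ I,
      deriv (fun t => v₁ (ρ t)) x = (Real.sqrt (μ x / w x) : ℂ) * deriv v₁ (ρ x) ∧
      (1 / (μ x : ℂ)) *
          deriv (fun t => ((w t * Real.sqrt (μ t / w t) : ℝ) : ℂ) * v₂ (ρ t)) x =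
        (1 / (ν (ρ x) : ℂ)) * deriv (fun y => (ν y : ℂ) * v₂ y) (ρ x) := by
  intro x hx
  have hμx := hμ x hx
  have hwx := hw x hx
  have hρx := hρ x hx
  -- key pointwise identity: w t * √(μ t / w t) = √(μ t * w t) for t ∈ I
  have key : ∀ t ∈ I, w t * Real.sqrt (μ t / w t) = Real.sqrt (μ t * w t) := by
    intro t ht
    have hwt := hw t ht
    have hμt := hμ t ht
    have h1 : w t * Real.sqrt (μ t / w t) = Real.sqrt (μ t / w t * (w t) ^ 2) := by
      rw [Real.sqrt_mul (div_nonneg hμt.le hwt.le), Real.sqrt_sq hwt.le]; ring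
    rw [h1]
    congr 1
    field_simp
  constructor
  · have h1 : HasDerivAt (fun t => v₁ (ρ t))
        (Real.sqrt (μ x / w x) • deriv v₁ (ρ x)) x :=
      HasDerivAt.scomp x (hv₁ (ρ x)).hasDerivAt hρx
    rw [h1.deriv, Complex.real_smul]
  · have heq : (fun t => ((w t * Real.sqrt (μ t / w t) : ℝ) : ℂ) * v₂ (ρ t))
        =ᶠ[nhds x] (fun t => (ν (ρ t) : ℂ) * v₂ (ρ t)) := by
      filter_upwards [hI.mem_nhds hx] with t ht
      rw [hν t ht, key t ht]
    rw [heq.deriv_eq]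
    have h2 : HasDerivAt (fun t => (ν (ρ t) : ℂ) * v₂ (ρ t))
        (Real.sqrt (μ x / w x) • deriv (fun y => (ν y : ℂ) * v₂ y) (ρ x)) x :=
      HasDerivAt.scomp x (hνv₂ (ρ x)).hasDerivAt hρx
    rw [h2.deriv, Complex.real_smul, hν x hx]
    -- algebra: (1/μ) * √(μ/w) = 1 / √(μ w)
    have hr : Real.sqrt (μ x / w x) / μ x = 1 / Real.sqrt (μ x * w x) := by
      have h3 : Real.sqrt (μ x) * Real.sqrt (μ x) = μ x := Real.mul_self_sqrt hμx.le
      have h4 : Real.sqrt (w x) * Real.sqrt (w x) = w x := Real.mul_self_sqrt hwx.le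
      have h5 : (0:ℝ) < Real.sqrt (μ x) := Real.sqrt_pos.2 hμx
      have h6 : (0:ℝ) < Real.sqrt (w x) := Real.sqrt_pos.2 hwx
      rw [Real.sqrt_div hμx.le, Real.sqrt_mul hμx.le]
      field_simp
      nlinarith [h3, h4]
    have : (1 / (μ x : ℂ)) * ((Real.sqrt (μ x / w x) : ℂ) * deriv (fun y => (ν y : ℂ) * v₂ y) (ρ x))
        = ((Real.sqrt (μ x / w x) / μ x : ℝ) : ℂ) * deriv (fun y => (ν y : ℂ) * v₂ y) (ρ x) := by
      push_cast
      ring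
    rw [this, hr]
    push_cast
    ring
end

section
/- Let $W(x) = R(x) \,\mathrm{diag}(1, 1+2r)\, R(x)^{-1}$ where $R(x)$ is the rotation matrix by angle $x$ and $r \ge 0$. Then $\Big\|\Big(\fint_0^{\pi} W(x)\,dx\Big)^{1/2}\Big(\fint_0^{\pi} W^{-1}(x)\,dx\Big)^{1/2}\Big\|_{\mathrm{op}}^2 \to \infty$ as $r \to \infty$, even though for each fixed $x_0$ the constant matrix $W(x_0)$ has matrix $A_2$ constant equal to $1$. -/
open MeasureTheory Filter
open Real Matrix

attribute [local instance] Matrix.normedAddCommGroup Matrix.normedSpace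

/-- The rotation matrix by angle `x`. -/
noncomputable def rotM (x : ℝ) : Matrix (Fin 2) (Fin 2) ℝ :=
  !![Real.cos x, -Real.sin x; Real.sin x, Real.cos x]

/-- The matrix weight `W(x) = R(x) diag(1, 1+2r) R(x)⁻¹`. -/
noncomputable def Wmat (r x : ℝ) : Matrix (Fin 2) (Fin 2) ℝ :=
  rotM x * Matrix.diagonal ![1, 1 + 2 * r] * (rotM x)⁻¹

lemma rot_transpose (x : ℝ) : (rotM x)ᵀ = !![Real.cos x, Real.sin x; -Real.sin x, Real.cos x] := by
  ext i j; fin_cases i <;> fin_cases j <;> simp [rotM]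

lemma rot_mul_transpose (x : ℝ) : rotM x * (rotM x)ᵀ = 1 := by
  rw [rot_transpose, rotM, Matrix.mul_fin_two, Matrix.one_fin_two]
  ext i j; fin_cases i <;> fin_cases j <;> simp <;> nlinarith [Real.sin_sq_add_cos_sq x]

lemma transpose_mul_rot (x : ℝ) : (rotM x)ᵀ * rotM x = 1 := by
  rw [rot_transpose, rotM, Matrix.mul_fin_two, Matrix.one_fin_two]
  ext i j; fin_cases i <;> fin_cases j <;> simp <;> nlinarith [Real.sin_sq_add_cos_sq x]

lemma rot_inv (x : ℝ) : (rotM x)⁻¹ = (rotM x)ᵀ :=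
  Matrix.inv_eq_right_inv (rot_mul_transpose x)

noncomputable def Wgen (d x : ℝ) : Matrix (Fin 2) (Fin 2) ℝ :=
  !![Real.cos x ^ 2 + d * Real.sin x ^ 2, (1 - d) * (Real.sin x * Real.cos x);
     (1 - d) * (Real.sin x * Real.cos x), Real.sin x ^ 2 + d * Real.cos x ^ 2]

lemma diag_two (a b : ℝ) : Matrix.diagonal ![a, b] = !![a, 0; 0, b] := by
  ext i j; fin_cases i <;> fin_cases j <;> simp [Matrix.diagonal]

lemma conj_eq_Wgen (d x : ℝ) :
    rotM x * Matrix.diagonal ![1, d] * (rotM x)⁻¹ = Wgen d x := by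
  rw [rot_inv, rot_transpose, diag_two, rotM, Wgen, Matrix.mul_fin_two, Matrix.mul_fin_two]
  ext i j; fin_cases i <;> fin_cases j <;> simp <;> ring

lemma Wmat_eq (r x : ℝ) : Wmat r x = Wgen (1 + 2 * r) x := conj_eq_Wgen _ x

lemma Wgen_mul_Wgen_inv (d x : ℝ) (hd : d ≠ 0) : Wgen d x * Wgen d⁻¹ x = 1 := by
  have h1 : d * d⁻¹ = 1 := mul_inv_cancel₀ hd
  have h2 := Real.sin_sq_add_cos_sq x
  rw [Wgen, Wgen, Matrix.mul_fin_two, Matrix.one_fin_two]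
  ext i j
  fin_cases i <;> fin_cases j <;> simp
  · linear_combination (Real.sin x ^ 2 * Real.cos x ^ 2 + Real.sin x ^ 4) * h1 +
      (Real.sin x ^ 2 + Real.cos x ^ 2 + 1) * h2
  · linear_combination (-(Real.sin x * Real.cos x) * (Real.sin x ^ 2 + Real.cos x ^ 2)) * h1
  · linear_combination (-(Real.sin x * Real.cos x) * (Real.sin x ^ 2 + Real.cos x ^ 2)) * h1
  · linear_combination (Real.sin x ^ 2 * Real.cos x ^ 2 + Real.cos x ^ 4) * h1 +
      (Real.sin x ^ 2 + Real.cos x ^ 2 + 1) * h2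

lemma Wgen_inv (d x : ℝ) (hd : d ≠ 0) : (Wgen d x)⁻¹ = Wgen d⁻¹ x :=
  Matrix.inv_eq_right_inv (Wgen_mul_Wgen_inv d x hd)

lemma Wgen_decomp (d x : ℝ) : Wgen d x =
    Real.cos x ^ 2 • !![(1:ℝ), 0; 0, d] + Real.sin x ^ 2 • !![(d:ℝ), 0; 0, 1] +
      (Real.sin x * Real.cos x) • !![(0:ℝ), 1 - d; 1 - d, 0] := by
  rw [Wgen]; ext i j; fin_cases i <;> fin_cases j <;> simp [Matrix.smul_apply] <;> ring

noncomputable instance : ENormedAddMonoid (Matrix (Fin 2) (Fin 2) ℝ) :=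
  NormedAddGroup.toENormedAddMonoid

lemma integral_Wgen (d : ℝ) :
    ∫ x in (0:ℝ)..Real.pi, Wgen d x
      = (Real.pi * ((1 + d) / 2)) • (1 : Matrix (Fin 2) (Fin 2) ℝ) := by
  have hc : IntervalIntegrable (fun x => Real.cos x ^ 2 • !![(1:ℝ), 0; 0, d])
      MeasureTheory.volume 0 Real.pi :=
    (Continuous.smul (f := fun x => Real.cos x ^ 2) (by continuity) continuous_const).intervalIntegrable _ _
  have hs : IntervalIntegrable (fun x => Real.sin x ^ 2 • !![(d:ℝ), 0; 0, 1])
      MeasureTheory.volume 0 Real.pi :=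
    (Continuous.smul (f := fun x => Real.sin x ^ 2) (by continuity) continuous_const).intervalIntegrable _ _
  have hsc : IntervalIntegrable (fun x => (Real.sin x * Real.cos x) • !![(0:ℝ), 1 - d; 1 - d, 0])
      MeasureTheory.volume 0 Real.pi :=
    (Continuous.smul (f := fun x => Real.sin x * Real.cos x) (by continuity) continuous_const).intervalIntegrable _ _
  simp only [Wgen_decomp]
  rw [intervalIntegral.integral_add (hc.add hs) hsc, intervalIntegral.integral_add hc hs,
    intervalIntegral.integral_smul_const, intervalIntegral.integral_smul_const,
    intervalIntegral.integral_smul_const, integral_cos_sq, integral_sin_sq,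
    integral_sin_mul_cos₁]
  simp
  ext i j; fin_cases i <;> fin_cases j <;> simp [Matrix.smul_apply, Matrix.one_apply] <;> ring

lemma posSemidef_smul_one {c : ℝ} (hc : 0 ≤ c) :
    (c • (1 : Matrix (Fin 2) (Fin 2) ℝ)).PosSemidef := by
  have : c • (1 : Matrix (Fin 2) (Fin 2) ℝ) = Matrix.diagonal (fun _ => c) := by
    ext i j; simp [Matrix.diagonal, Matrix.one_apply, mul_ite]
  rw [this]
  exact Matrix.posSemidef_diagonal_iff.mpr fun _ => hc

open scoped MatrixOrder in
lemma Matrix.PosSemidef.eq_of_sq_eq_sq {A B : Matrix (Fin 2) (Fin 2) ℝ} (hA : A.PosSemidef)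
    (hB : B.PosSemidef) (hAB : A ^ 2 = B ^ 2) : A = B :=
  (CFC.sq_eq_sq_iff A B hA.nonneg hB.nonneg).mp hAB

lemma sqrt_of_smul_one {S : Matrix (Fin 2) (Fin 2) ℝ} {c : ℝ} (hc : 0 ≤ c)
    (hS : S.PosSemidef) (h : S * S = c • 1) : S = Real.sqrt c • 1 := by
  refine hS.eq_of_sq_eq_sq (posSemidef_smul_one (Real.sqrt_nonneg c)) ?_
  rw [pow_two, pow_two, h, smul_mul_smul_comm, one_mul, Real.mul_self_sqrt hc]

set_option synthInstance.maxHeartbeats 1000000 in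
lemma norm_clm_smul_one (c : ℝ) :
    ‖Matrix.toEuclideanCLM (𝕜 := ℝ) (c • (1 : Matrix (Fin 2) (Fin 2) ℝ))‖ = |c| := by
  rw [_root_.map_smul, _root_.map_one]
  rw [norm_smul c (1 : EuclideanSpace ℝ (Fin 2) →L[ℝ] EuclideanSpace ℝ (Fin 2))]
  rw [norm_one, mul_one, Real.norm_eq_abs]

lemma rot_conjTranspose (x : ℝ) : (rotM x)ᴴ = (rotM x)ᵀ := by
  ext i j; simp [Matrix.conjTranspose_apply]

noncomputable def sqrtW (d x : ℝ) : Matrix (Fin 2) (Fin 2) ℝ :=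
  rotM x * Matrix.diagonal ![1, Real.sqrt d] * (rotM x)⁻¹

lemma sqrtW_posSemidef (d x : ℝ) : (sqrtW d x).PosSemidef := by
  rw [sqrtW, rot_inv, ← rot_conjTranspose]
  refine Matrix.PosSemidef.mul_mul_conjTranspose_same ?_ _
  refine Matrix.posSemidef_diagonal_iff.mpr fun i => ?_
  fin_cases i <;> simp [Real.sqrt_nonneg]

lemma sqrtW_mul_sqrtW (d e x : ℝ) :
    sqrtW d x * sqrtW e x
      = rotM x * Matrix.diagonal ![1, Real.sqrt d * Real.sqrt e] * (rotM x)⁻¹ := by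
  rw [sqrtW, sqrtW, rot_inv]
  have h : ∀ A B : Matrix (Fin 2) (Fin 2) ℝ,
      rotM x * A * (rotM x)ᵀ * (rotM x * B * (rotM x)ᵀ)
        = rotM x * (A * ((rotM x)ᵀ * rotM x) * B) * (rotM x)ᵀ := by
    intros; simp only [Matrix.mul_assoc]
  rw [h, transpose_mul_rot, mul_one, Matrix.diagonal_mul_diagonal]
  congr 2
  ext i j
  fin_cases i <;> fin_cases j <;> simp [Matrix.diagonal]

lemma sqrtW_sq (d x : ℝ) (hd : 0 ≤ d) :
    sqrtW d x * sqrtW d x = rotM x * Matrix.diagonal ![1, d] * (rotM x)⁻¹ := by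
  rw [sqrtW_mul_sqrtW, Real.mul_self_sqrt hd]

lemma sqrtW_mul_sqrtW_inv (d x : ℝ) (hd : 0 < d) : sqrtW d x * sqrtW d⁻¹ x = 1 := by
  rw [sqrtW_mul_sqrtW, Real.sqrt_inv, mul_inv_cancel₀ (Real.sqrt_pos.mpr hd).ne']
  have : Matrix.diagonal ![(1:ℝ), 1] = 1 := by
    ext i j; fin_cases i <;> fin_cases j <;> simp
  rw [this, mul_one, rot_inv, rot_mul_transpose]

set_option maxHeartbeats 1000000 in
set_option synthInstance.maxHeartbeats 1000000 in
/-- For `W(x) = R(x) diag(1, 1+2r) R(x)⁻¹`, the matrix `A₂` quantity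
`‖(⨍₀^π W)^{1/2} (⨍₀^π W⁻¹)^{1/2}‖_op²` tends to `∞` as `r → ∞`, even though each
constant matrix `W(x₀)` has matrix `A₂` constant equal to `1`. -/
theorem stmt_7 :
    (∀ S T : ℝ → Matrix (Fin 2) (Fin 2) ℝ,
      (∀ r : ℝ, 0 ≤ r → (S r).PosSemidef ∧
        S r * S r = (Real.pi)⁻¹ • ∫ x in (0 : ℝ)..Real.pi, Wmat r x) →
      (∀ r : ℝ, 0 ≤ r → (T r).PosSemidef ∧
        T r * T r = (Real.pi)⁻¹ • ∫ x in (0 : ℝ)..Real.pi, (Wmat r x)⁻¹) →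
      Tendsto (fun r => ‖Matrix.toEuclideanCLM (𝕜 := ℝ) (S r * T r)‖ ^ 2) atTop atTop) ∧
    (∀ r x₀ : ℝ, 0 ≤ r → ∀ S T : Matrix (Fin 2) (Fin 2) ℝ,
      S.PosSemidef → S * S = Wmat r x₀ → T.PosSemidef → T * T = (Wmat r x₀)⁻¹ →
      ‖Matrix.toEuclideanCLM (𝕜 := ℝ) (S * T)‖ ^ 2 = 1) := by
  constructor
  · intro S T hS hT
    have key : ∀ r : ℝ, 0 ≤ r →
        ‖Matrix.toEuclideanCLM (𝕜 := ℝ) (S r * T r)‖ ^ 2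
          = (1 + r) * ((1 + (1 + 2 * r)⁻¹) / 2) := by
      intro r hr
      have hd : (0:ℝ) < 1 + 2 * r := by linarith
      have hSr : S r = Real.sqrt (1 + r) • 1 := by
        refine sqrt_of_smul_one (by linarith) (hS r hr).1 ?_
        rw [(hS r hr).2]
        simp only [Wmat_eq, integral_Wgen]
        rw [smul_smul]
        congr 1
        field_simp
        ring
      have hTr : T r = Real.sqrt ((1 + (1 + 2 * r)⁻¹) / 2) • 1 := by
        refine sqrt_of_smul_one (by positivity) (hT r hr).1 ?_
        rw [(hT r hr).2]
        have hinv : ∀ x : ℝ, (Wmat r x)⁻¹ = Wgen (1 + 2 * r)⁻¹ x := fun x => by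
          rw [Wmat_eq, Wgen_inv _ _ hd.ne']
        simp only [hinv, integral_Wgen]
        rw [smul_smul]
        congr 1
        field_simp
      rw [hSr, hTr, smul_mul_smul_comm, one_mul, norm_clm_smul_one, sq_abs, mul_pow,
        Real.sq_sqrt (by linarith), Real.sq_sqrt (by positivity)]
    refine tendsto_atTop_mono' atTop ?_
      ((tendsto_atTop_add_const_left _ 1 tendsto_id).atTop_div_const (by norm_num : (0:ℝ) < 2))
    filter_upwards [eventually_ge_atTop (0:ℝ)] with r hr
    rw [key r hr]
    simp only [id_eq]
    have h1 : (0:ℝ) ≤ (1 + 2 * r)⁻¹ := by positivity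
    nlinarith [mul_nonneg (by linarith : (0:ℝ) ≤ 1 + r) h1]
  · intro r x₀ hr S T hSpsd hSsq hTpsd hTsq
    have hd : (0:ℝ) < 1 + 2 * r := by linarith
    have hS' : S = sqrtW (1 + 2 * r) x₀ := by
      refine hSpsd.eq_of_sq_eq_sq (sqrtW_posSemidef _ _) ?_
      rw [pow_two, pow_two, hSsq, sqrtW_sq _ _ hd.le, Wmat]
    have hT' : T = sqrtW (1 + 2 * r)⁻¹ x₀ := by
      refine hTpsd.eq_of_sq_eq_sq (sqrtW_posSemidef _ _) ?_
      rw [pow_two, pow_two, hTsq, sqrtW_sq _ _ (by positivity : (0:ℝ) ≤ (1 + 2 * r)⁻¹),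
        Wmat_eq, Wgen_inv _ _ hd.ne', ← conj_eq_Wgen]
    rw [hS', hT', sqrtW_mul_sqrtW_inv _ _ hd, _root_.map_one, norm_one, one_pow]
end

section
/- Let $\mathcal{I}$ be the block involution $\mathcal{I}\begin{bmatrix} a & b \\ c & d \end{bmatrix} = \begin{bmatrix} a^{-1} & -a^{-1}b \\ ca^{-1} & d - ca^{-1}b \end{bmatrix}$. For scalars $v_1, v_2 \ne 0$ and invertible matrices $W_1, W_2$, the identity $\mathcal{I}\Big(\begin{bmatrix} v_1 & 0\\ 0 & W_1\end{bmatrix} A \begin{bmatrix} v_2 & 0\\ 0 & W_2\end{bmatrix}\Big) = \begin{bmatrix} v_2^{-1} & 0\\ 0 & W_1\end{bmatrix} \mathcal{I}(A) \begin{bmatrix} v_1^{-1} & 0\\ 0 & W_2\end{bmatrix}$ holds whenever $A = \begin{bmatrix} a & b \\ c & d\end{bmatrix}$ has $a$ invertible. -/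
open Matrix

/-- The block involution `𝓘 [a b; c d] = [a⁻¹  -a⁻¹b; ca⁻¹  d - ca⁻¹b]`. -/
noncomputable def blkI {n : ℕ} (M : Matrix (Unit ⊕ Fin n) (Unit ⊕ Fin n) ℂ) :
    Matrix (Unit ⊕ Fin n) (Unit ⊕ Fin n) ℂ :=
  Matrix.fromBlocks (M.toBlocks₁₁)⁻¹ (-((M.toBlocks₁₁)⁻¹ * M.toBlocks₁₂))
    (M.toBlocks₂₁ * (M.toBlocks₁₁)⁻¹)
    (M.toBlocks₂₂ - M.toBlocks₂₁ * (M.toBlocks₁₁)⁻¹ * M.toBlocks₁₂)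

/-- Commutation of the block involution `𝓘` with diagonal weights:
`𝓘(diag(v₁,W₁) · A · diag(v₂,W₂)) = diag(v₂⁻¹,W₁) · 𝓘(A) · diag(v₁⁻¹,W₂)`
for nonzero scalars `v₁, v₂` and invertible matrices `W₁, W₂`, whenever the upper-left
block of `A` is invertible. -/
theorem stmt_11 {n : ℕ} (M : Matrix (Unit ⊕ Fin n) (Unit ⊕ Fin n) ℂ)
    (v₁ v₂ : ℂ) (hv₁ : v₁ ≠ 0) (hv₂ : v₂ ≠ 0)
    (W₁ W₂ : Matrix (Fin n) (Fin n) ℂ) (hW₁ : IsUnit W₁) (hW₂ : IsUnit W₂)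
    (hM : IsUnit M.toBlocks₁₁) :
    blkI (Matrix.fromBlocks (v₁ • (1 : Matrix Unit Unit ℂ)) 0 0 W₁ * M *
        Matrix.fromBlocks (v₂ • (1 : Matrix Unit Unit ℂ)) 0 0 W₂) =
      Matrix.fromBlocks (v₂⁻¹ • (1 : Matrix Unit Unit ℂ)) 0 0 W₁ * blkI M *
        Matrix.fromBlocks (v₁⁻¹ • (1 : Matrix Unit Unit ℂ)) 0 0 W₂ := by
  set a := M.toBlocks₁₁ with ha
  set b := M.toBlocks₁₂ with hb
  set c := M.toBlocks₂₁ with hc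
  set d := M.toBlocks₂₂ with hd
  have hdet : IsUnit a.det := (Matrix.isUnit_iff_isUnit_det a).mp hM
  have hinv : ((v₂ * v₁) • a)⁻¹ = (v₁⁻¹ * v₂⁻¹) • a⁻¹ := by
    have h0 : (v₂ * v₁) ≠ 0 := mul_ne_zero hv₂ hv₁
    have := Matrix.inv_smul' (A := a) (Units.mk0 (v₂ * v₁) h0) hdet
    rw [Units.smul_def, Units.smul_def, Units.val_inv_eq_inv_val, Units.val_mk0] at this
    rw [this, mul_inv, mul_comm v₂⁻¹ v₁⁻¹]
  have hMeq : M = Matrix.fromBlocks a b c d := (Matrix.fromBlocks_toBlocks M).symm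
  have e1 : v₁ * (v₁⁻¹ * v₂⁻¹) = v₂⁻¹ := by field_simp <;> ring
  have e2 : v₂ * (v₁⁻¹ * v₂⁻¹) = v₁⁻¹ := by field_simp <;> ring
  have e3 : v₁ * v₂ * (v₁⁻¹ * v₂⁻¹) = 1 := by field_simp <;> ring
  have e4 : v₁⁻¹ * v₂⁻¹ * v₂ = v₁⁻¹ := by field_simp <;> ring
  have e5 : v₁ * (v₁⁻¹ * v₂⁻¹ * v₂) = 1 := by field_simp <;> ring
  have e6 : v₁ * v₁⁻¹ = 1 := mul_inv_cancel₀ hv₁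
  rw [hMeq]
  simp only [blkI, Matrix.fromBlocks_multiply, Matrix.toBlocks_fromBlocks₁₁,
    Matrix.toBlocks_fromBlocks₁₂, Matrix.toBlocks_fromBlocks₂₁, Matrix.toBlocks_fromBlocks₂₂,
    Matrix.smul_mul, Matrix.mul_smul, Matrix.one_mul, Matrix.mul_one, Matrix.zero_mul,
    Matrix.mul_zero, add_zero, zero_add, smul_smul, hinv, smul_neg,
    Matrix.neg_mul, Matrix.mul_neg, e1, e2, e3, one_smul, neg_zero,
    Matrix.sub_mul, Matrix.mul_sub, Matrix.mul_assoc, e4, e5, sub_zero, sub_self, e6, one_smul]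
end

section
/- Let $\mathcal{I}$ be the block involution $\mathcal{I}\begin{bmatrix} a & b \\ c & d \end{bmatrix} = \begin{bmatrix} a^{-1} & -a^{-1}b \\ ca^{-1} & d - ca^{-1}b \end{bmatrix}$ on complex $(1+n)\times(1+n)$ matrices with $a \in \mathbb{C}$. If $A$ is accretive, i.e. $\mathrm{Re}\langle A v, v\rangle \ge \kappa |v|^2$ for all $v \in \mathbb{C}^{1+n}$ and $|A| \le \Lambda$, then $a$ is invertible, $\mathcal{I}(A)$ is well defined, and $\mathcal{I}(A)$ is bounded and accretive with constants depending only on $\kappa$ and $\Lambda$. -/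
open Matrix

lemma stmt12_aux_dot {n : ℕ} (v : Unit ⊕ Fin n → ℂ) :
    (star v ⬝ᵥ v).re = ∑ i, ‖v i‖^2 := by
  rw [dotProduct, Complex.re_sum]
  refine Finset.sum_congr rfl fun i _ => ?_
  simp only [Pi.star_apply, Complex.star_def]
  rw [mul_comm, Complex.mul_conj']
  norm_cast

set_option maxHeartbeats 2000000 in
/-- If `M` is bounded by `Λ` and accretive with constant `κ > 0`, then its
upper-left block is invertible, `𝓘(M)` is well defined, and `𝓘(M)` is bounded and accretive
with constants depending only on `κ` and `Λ`. -/
theorem stmt_12 {n : ℕ} (κ Λ : ℝ) (hκ : 0 < κ) :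
    ∃ Λ' κ' : ℝ, 0 < κ' ∧
      ∀ M : Matrix (Unit ⊕ Fin n) (Unit ⊕ Fin n) ℂ,
        ‖Matrix.toEuclideanCLM (𝕜 := ℂ) M‖ ≤ Λ →
        (∀ v : Unit ⊕ Fin n → ℂ, κ * (star v ⬝ᵥ v).re ≤ (star v ⬝ᵥ M.mulVec v).re) →
        IsUnit M.toBlocks₁₁ ∧
        ‖Matrix.toEuclideanCLM (𝕜 := ℂ) (blkI M)‖ ≤ Λ' ∧
        ∀ v : Unit ⊕ Fin n → ℂ,
          κ' * (star v ⬝ᵥ v).re ≤ (star v ⬝ᵥ (blkI M).mulVec v).re := by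
  classical
  set C2 : ℝ := 2 * (1 + Λ^2) / κ^2 + 1 with hC2def
  have hC2 : 0 < C2 := by positivity
  refine ⟨Real.sqrt ((1 + Λ^2) * C2), κ / (2 * Λ^2 + 1), by positivity, ?_⟩
  intro M hM hacc
  have hΛ0 : 0 ≤ Λ := le_trans (norm_nonneg _) hM
  -- the operator norm bound in coordinates
  have hnorm : ∀ w : Unit ⊕ Fin n → ℂ,
      ∑ i, ‖(M *ᵥ w) i‖^2 ≤ Λ^2 * ∑ i, ‖w i‖^2 := by
    intro w
    have h := (Matrix.toEuclideanCLM (𝕜 := ℂ) M).le_opNorm ((WithLp.equiv 2 _).symm w)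
    rw [WithLp.equiv_symm_apply, Matrix.toEuclideanCLM_toLp] at h
    have h2 : ‖(WithLp.equiv 2 ((Unit ⊕ Fin n) → ℂ)).symm (M *ᵥ w)‖ ≤
        Λ * ‖(WithLp.equiv 2 ((Unit ⊕ Fin n) → ℂ)).symm w‖ := le_trans h (by gcongr; exact le_rfl)
    rw [EuclideanSpace.norm_eq, EuclideanSpace.norm_eq] at h2
    simp only [WithLp.equiv_symm_apply, PiLp.toLp_apply] at h2
    have h3 := pow_le_pow_left₀ (Real.sqrt_nonneg _) h2 2
    rwa [Real.sq_sqrt (by positivity), mul_pow, Real.sq_sqrt (by positivity)] at h3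
  set a : ℂ := M (Sum.inl ()) (Sum.inl ()) with hadef
  -- κ ≤ Re a
  have hare : κ ≤ a.re := by
    have h := hacc (Sum.elim (fun _ => 1) 0)
    simpa [dotProduct, Fintype.sum_sum_type, mulVec] using h
  have ha : a ≠ 0 := by
    intro h
    rw [h] at hare
    simp at hare
    linarith
  have hainv : ‖a⁻¹‖ ≤ 1 / κ := by
    rw [norm_inv]
    have h1 : κ ≤ ‖a‖ := le_trans hare (Complex.re_le_norm a)
    rw [div_eq_mul_inv, one_mul]
    exact inv_anti₀ hκ h1
  have hAnorm : ‖a‖ ≤ Λ := by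
    have h := hnorm (Sum.elim (fun _ => 1) 0)
    have h2 : ‖a‖^2 ≤ Λ^2 := by
      calc ‖a‖^2 = ‖(M *ᵥ Sum.elim (fun _ => 1) 0) (Sum.inl ())‖^2 := by
            simp [mulVec, dotProduct, Fintype.sum_sum_type, hadef]
        _ ≤ ∑ i, ‖(M *ᵥ Sum.elim (fun _ => (1:ℂ)) 0) i‖^2 :=
            Finset.single_le_sum (f := fun i => ‖(M *ᵥ Sum.elim (fun _ => (1:ℂ)) 0) i‖^2)
              (fun i _ => by positivity) (Finset.mem_univ _)
        _ ≤ Λ^2 * ∑ i, ‖Sum.elim (fun _ => (1:ℂ)) (0 : Fin n → ℂ) i‖^2 := h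
        _ = Λ^2 := by simp [Fintype.sum_sum_type]
    nlinarith [norm_nonneg a]
  have hinv : (M.toBlocks₁₁)⁻¹ = Matrix.of (fun _ _ : Unit => a⁻¹) := by
    apply Matrix.inv_eq_right_inv
    ext i j
    simp [Matrix.mul_apply, Matrix.toBlocks₁₁, Matrix.one_apply, mul_inv_cancel₀ ha, ← hadef]
  have hunit : IsUnit M.toBlocks₁₁ := by
    rw [Matrix.isUnit_iff_isUnit_det]
    simpa [Matrix.det_unique, Matrix.toBlocks₁₁, ← hadef] using ha.isUnit
  -- main per-vector decomposition
  have hmain : ∀ v : Unit ⊕ Fin n → ℂ, ∃ u : Unit ⊕ Fin n → ℂ,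
      (star v ⬝ᵥ (blkI M).mulVec v).re = (star u ⬝ᵥ M.mulVec u).re ∧
      (∑ i, ‖v i‖^2) ≤ (2 * Λ^2 + 1) * ∑ i, ‖u i‖^2 ∧
      (∑ i, ‖u i‖^2) ≤ C2 * ∑ i, ‖v i‖^2 ∧
      (∑ i, ‖((blkI M) *ᵥ v) i‖^2) ≤ (1 + Λ^2) * ∑ i, ‖u i‖^2 := by
    intro v
    set v0 : ℂ := v (Sum.inl ()) with hv0def
    set B : ℂ := ∑ k, M (Sum.inl ()) (Sum.inr k) * v (Sum.inr k) with hBdef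
    set u0 : ℂ := a⁻¹ * (v0 - B) with hu0def
    set u : Unit ⊕ Fin n → ℂ := Sum.elim (fun _ => u0) (fun k => v (Sum.inr k)) with hudef
    have hul : u (Sum.inl ()) = u0 := by simp [hudef]
    have hur : ∀ k, u (Sum.inr k) = v (Sum.inr k) := fun k => by simp [hudef]
    have hinv' : (M.toBlocks₁₁)⁻¹ =
        Matrix.of (fun _ _ : Unit => (M (Sum.inl ()) (Sum.inl ()))⁻¹) := by
      rw [hinv, hadef]
    have ha' : M (Sum.inl ()) (Sum.inl ()) ≠ 0 := by rw [← hadef]; exact ha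
    have key1 : (M *ᵥ u) (Sum.inl ()) = v0 := by
      simp only [hudef, hu0def, hBdef, hv0def, hadef]
      simp [mulVec, dotProduct, Fintype.sum_sum_type, mul_sub, ← mul_assoc,
        mul_inv_cancel₀ ha']
    have key2 : (blkI M) *ᵥ v = Sum.elim (fun _ => u0) (fun k => (M *ᵥ u) (Sum.inr k)) := by
      simp only [hudef, hu0def, hBdef, hv0def, hadef]
      funext i
      cases i with
      | inl i =>
        simp [blkI, mulVec, dotProduct, Fintype.sum_sum_type, hinv', Matrix.mul_apply,
          Matrix.toBlocks₁₁, Matrix.toBlocks₁₂, mul_sub, mul_add, mul_neg,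
          Finset.mul_sum, mul_assoc, sub_eq_add_neg]
      | inr k =>
        simp [blkI, mulVec, dotProduct, Fintype.sum_sum_type, hinv', Matrix.mul_apply,
          Matrix.toBlocks₁₁, Matrix.toBlocks₁₂, Matrix.toBlocks₂₁, Matrix.toBlocks₂₂,
          mul_sub, sub_mul, mul_add, mul_neg, add_mul, neg_mul,
          Finset.mul_sum, Finset.sum_sub_distrib, mul_assoc, sub_eq_add_neg]
        ring_nf
        rw [sub_eq_add_neg, ← Finset.sum_neg_distrib, add_assoc, ← Finset.sum_add_distrib]
        congr 1
        exact Finset.sum_congr rfl fun x _ => by ring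
    set Sv : ℝ := ∑ k, ‖v (Sum.inr k)‖^2 with hSvdef
    have hSv0 : 0 ≤ Sv := by positivity
    have hEu : ∑ i, ‖u i‖^2 = ‖u0‖^2 + Sv := by
      rw [Fintype.sum_sum_type]
      simp [hul, hur, hSvdef]
    have hEv : ∑ i, ‖v i‖^2 = ‖v0‖^2 + Sv := by
      rw [Fintype.sum_sum_type]
      simp [← hv0def, hSvdef]
    have hau0 : a * u0 = v0 - B := by
      rw [hu0def, ← mul_assoc, mul_inv_cancel₀ ha, one_mul]
    have hB2 : ‖B‖^2 ≤ Λ^2 * Sv := by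
      have h := hnorm (Sum.elim 0 (fun k => v (Sum.inr k)))
      have hBeq : B = (M *ᵥ Sum.elim 0 (fun k => v (Sum.inr k))) (Sum.inl ()) := by
        simp [mulVec, dotProduct, Fintype.sum_sum_type, hBdef]
      calc ‖B‖^2 = ‖(M *ᵥ Sum.elim 0 (fun k => v (Sum.inr k))) (Sum.inl ())‖^2 := by rw [hBeq]
        _ ≤ ∑ i, ‖(M *ᵥ Sum.elim 0 (fun k => v (Sum.inr k))) i‖^2 :=
            Finset.single_le_sum
              (f := fun i => ‖(M *ᵥ Sum.elim (0 : Unit → ℂ) (fun k => v (Sum.inr k))) i‖^2)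
              (fun i _ => by positivity) (Finset.mem_univ _)
        _ ≤ Λ^2 * ∑ i, ‖Sum.elim (0 : Unit → ℂ) (fun k => v (Sum.inr k)) i‖^2 := h
        _ = Λ^2 * Sv := by
            congr 1
            rw [Fintype.sum_sum_type]
            simp [hSvdef]
    refine ⟨u, ?_, ?_, ?_, ?_⟩
    · -- the Re identity
      have L : star v ⬝ᵥ (blkI M).mulVec v =
          (starRingEnd ℂ) v0 * u0 +
            ∑ k, (starRingEnd ℂ) (v (Sum.inr k)) * (M *ᵥ u) (Sum.inr k) := by
        rw [show (blkI M).mulVec v = _ from key2]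
        simp [dotProduct, Fintype.sum_sum_type, Complex.star_def, ← hv0def]
      have R : star u ⬝ᵥ M.mulVec u =
          (starRingEnd ℂ) u0 * v0 +
            ∑ k, (starRingEnd ℂ) (v (Sum.inr k)) * (M *ᵥ u) (Sum.inr k) := by
        simp [dotProduct, Fintype.sum_sum_type, Complex.star_def, hul, hur, key1]
      rw [L, R]
      simp only [Complex.add_re, Complex.mul_re, Complex.conj_re, Complex.conj_im]
      ring
    · -- lower bound on E u
      rw [hEu, hEv]
      have htri : ‖v0‖ ≤ Λ * ‖u0‖ + ‖B‖ := by
        calc ‖v0‖ = ‖a * u0 + B‖ := by rw [hau0]; ring_nf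
          _ ≤ ‖a * u0‖ + ‖B‖ := norm_add_le _ _
          _ = ‖a‖ * ‖u0‖ + ‖B‖ := by rw [norm_mul]
          _ ≤ Λ * ‖u0‖ + ‖B‖ := by
              have := mul_le_mul_of_nonneg_right hAnorm (norm_nonneg u0)
              linarith
      have hsq := pow_le_pow_left₀ (norm_nonneg v0) htri 2
      nlinarith [sq_nonneg (Λ * ‖u0‖ - ‖B‖), norm_nonneg u0, norm_nonneg B,
        mul_nonneg hΛ0 (norm_nonneg u0)]
    · -- upper bound on E u
      rw [hEu, hEv]
      have haκ : κ ≤ ‖a‖ := le_trans hare (Complex.re_le_norm a)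
      have hu0b : κ * ‖u0‖ ≤ ‖v0‖ + ‖B‖ := by
        calc κ * ‖u0‖ ≤ ‖a‖ * ‖u0‖ := mul_le_mul_of_nonneg_right haκ (norm_nonneg u0)
          _ = ‖a * u0‖ := (norm_mul a u0).symm
          _ = ‖v0 - B‖ := by rw [hau0]
          _ ≤ ‖v0‖ + ‖B‖ := norm_sub_le _ _
      have h5 : κ^2 * ‖u0‖^2 ≤ 2 * (1 + Λ^2) * (‖v0‖^2 + Sv) := by
        have hsq := pow_le_pow_left₀ (by positivity) hu0b 2
        nlinarith [sq_nonneg (‖v0‖ - ‖B‖), norm_nonneg v0, norm_nonneg B, hSv0, sq_nonneg Λ]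
      have h6 : ‖u0‖^2 ≤ 2 * (1 + Λ^2) / κ^2 * (‖v0‖^2 + Sv) := by
        rw [div_mul_eq_mul_div, le_div_iff₀ (by positivity)]
        linarith [h5]
      rw [hC2def]
      calc ‖u0‖^2 + Sv ≤ 2 * (1 + Λ^2) / κ^2 * (‖v0‖^2 + Sv) + (‖v0‖^2 + Sv) := by
            have h8 := sq_nonneg ‖v0‖
            linarith
        _ = (2 * (1 + Λ^2) / κ^2 + 1) * (‖v0‖^2 + Sv) := by ring
    · -- bound for blkI M *ᵥ v
      simp only [key2]
      rw [hEu]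
      have hMu := hnorm u
      rw [hEu] at hMu
      have hsum : ∑ k, ‖(M *ᵥ u) (Sum.inr k)‖^2 ≤ Λ^2 * (‖u0‖^2 + Sv) := by
        refine le_trans ?_ hMu
        rw [Fintype.sum_sum_type]
        have : (0:ℝ) ≤ ∑ i : Unit, ‖(M *ᵥ u) (Sum.inl i)‖^2 := by positivity
        linarith
      rw [Fintype.sum_sum_type]
      simp only [Sum.elim_inl, Sum.elim_inr]
      have h7 : ∑ i : Unit, ‖u0‖^2 = ‖u0‖^2 := by simp
      rw [h7]
      calc ‖u0‖^2 + ∑ k, ‖(M *ᵥ u) (Sum.inr k)‖^2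
          ≤ (‖u0‖^2 + Sv) + Λ^2 * (‖u0‖^2 + Sv) := by linarith
        _ = (1 + Λ^2) * (‖u0‖^2 + Sv) := by ring
  refine ⟨hunit, ?_, ?_⟩
  · -- norm bound
    refine ContinuousLinearMap.opNorm_le_bound _ (Real.sqrt_nonneg _) fun x => ?_
    obtain ⟨u, h1, h2, h3, h4⟩ := hmain (WithLp.equiv 2 _ x)
    have hx : Matrix.toEuclideanCLM (𝕜 := ℂ) (blkI M) x =
        (WithLp.equiv 2 _).symm ((blkI M) *ᵥ (WithLp.equiv 2 _ x)) := by
      conv_lhs => rw [← (WithLp.equiv 2 _).symm_apply_apply x]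
      rw [WithLp.equiv_symm_apply, Matrix.toEuclideanCLM_toLp]
    rw [hx, EuclideanSpace.norm_eq]
    simp only [WithLp.equiv_symm_apply, PiLp.toLp_apply]
    have hxnorm : ‖x‖ = Real.sqrt (∑ i, ‖(WithLp.equiv 2 _ x) i‖^2) := by
      rw [EuclideanSpace.norm_eq]; rfl
    rw [hxnorm, ← Real.sqrt_mul (by positivity)]
    apply Real.sqrt_le_sqrt
    calc ∑ i, ‖((blkI M) *ᵥ (WithLp.equiv 2 _ x)) i‖^2
        ≤ (1 + Λ^2) * ∑ i, ‖u i‖^2 := h4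
      _ ≤ (1 + Λ^2) * (C2 * ∑ i, ‖(WithLp.equiv 2 _ x) i‖^2) := by
          apply mul_le_mul_of_nonneg_left h3 (by positivity)
      _ = (1 + Λ^2) * C2 * ∑ i, ‖(WithLp.equiv 2 _ x) i‖^2 := by ring
  · -- accretivity
    intro v
    obtain ⟨u, h1, h2, h3, h4⟩ := hmain v
    rw [h1, stmt12_aux_dot]
    have hu := hacc u
    rw [stmt12_aux_dot] at hu
    have hD : (0:ℝ) < 2 * Λ^2 + 1 := by positivity
    have step : κ / (2 * Λ^2 + 1) * ∑ i, ‖v i‖^2 ≤ κ * ∑ i, ‖u i‖^2 := by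
      rw [div_mul_eq_mul_div, div_le_iff₀ hD]
      nlinarith [mul_le_mul_of_nonneg_left h2 (le_of_lt hκ)]
    exact le_trans step hu
end
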